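/- Let r, s be natural numbers with 1 ≤ r and 1 ≤ s, let F be a field with (r·s : Cardinal) < Cardinal.mk F, and let ω ∈ F be such that the map (fun i : Fin (r+s) => ω ^ (i : ℕ)) is injective. For t : F let mom t : Fin (r+s) → F be the moment-curve vector (mom t) i = t ^ (i : ℕ), and define the ω-secant subspaces H : F → Submodule F (Fin (r+s) → F) by H t := ⨆_{n ∈ Finset.range r} Submodule.span F {mom (ω^n · t)} for t ≠ 0, and H 0 := ⨆_{i ∈ Finset.range r} Submodule.span F {Pi.single (i : Fin (r+s)) 1}. Then finrank (H t) = r for every t ∈ F, and the family (H t)_{t ∈ F} is an r-uniform weak (s, r·s) subspace design: for every submodule W of Fin (r+s) → F with finrank W = s, the set {t : F | H t ⊓ W ≠ ⊥} is finite with Set.ncard at most r·s. -/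

import Mathlib

open Module Polynomial Finset

namespace Stmt18Aux

lemma sum_range_card_le (T : Finset ℕ) : ∑ i ∈ Finset.range T.card, i ≤ ∑ i ∈ T, i := by
  suffices h : ∀ n (T : Finset ℕ), T.card = n → ∑ i ∈ Finset.range n, i ≤ ∑ i ∈ T, i by
    simpa using h T.card T rfl
  intro n
  induction n with
  | zero => simp
  | succ n ih =>
    intro T hn
    have hne : T.Nonempty := by rw [← Finset.card_pos, hn]; omega
    set M := T.max' hne with hM
    have hMT : M ∈ T := T.max'_mem hne
    have hcard : (T.erase M).card = n := by rw [Finset.card_erase_of_mem hMT, hn]; omega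
    have hMn : n ≤ M := by
      have hsub : T ⊆ Finset.range (M + 1) := fun x hx =>
        Finset.mem_range.2 (Nat.lt_succ_of_le (T.le_max' x hx))
      have := Finset.card_le_card hsub
      simp only [Finset.card_range, hn] at this
      omega
    have hih := ih (T.erase M) hcard
    have hsplit : M + ∑ i ∈ T.erase M, i = ∑ i ∈ T, i :=
      Finset.add_sum_erase T id hMT
    rw [Finset.sum_range_succ]
    omega

lemma sum_range_card_le_fin {m : ℕ} (T : Finset (Fin m)) :
    ∑ i ∈ Finset.range T.card, i ≤ ∑ i ∈ T, (i : ℕ) := by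
  have himg : ∑ i ∈ T.image (fun i : Fin m => (i : ℕ)), i = ∑ i ∈ T, (i : ℕ) :=
    Finset.sum_image (fun a _ b _ h => Fin.val_injective h)
  have hcard : (T.image (fun i : Fin m => (i : ℕ))).card = T.card :=
    Finset.card_image_of_injective _ Fin.val_injective
  calc ∑ i ∈ Finset.range T.card, i
      = ∑ i ∈ Finset.range (T.image (fun i : Fin m => (i : ℕ))).card, i := by rw [hcard]
    _ ≤ ∑ i ∈ T.image (fun i : Fin m => (i : ℕ)), i := sum_range_card_le _
    _ = ∑ i ∈ T, (i : ℕ) := himg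

lemma sum_range_add (a b : ℕ) :
    ∑ i ∈ Finset.range (a + b), i = ∑ i ∈ Finset.range a, i + (a * b + ∑ i ∈ Finset.range b, i) := by
  induction b with
  | zero => simp
  | succ b ih =>
    rw [show a + (b + 1) = (a + b) + 1 by ring, Finset.sum_range_succ, ih, Finset.sum_range_succ]
    ring

lemma linind_triangular {F : Type*} [Field F] {m : ℕ} {ι : Type*} [Fintype ι] {piv : ι → Fin m}
    (hinj : Function.Injective piv) {b : ι → Fin m → F}
    (hdiag : ∀ k, b k (piv k) = 1) (hzero : ∀ k j, piv k < j → b k j = 0) :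
    LinearIndependent F b := by
  classical
  rw [linearIndependent_iff']
  intro t g hsum k hk
  by_contra hg
  set t' := t.filter (fun k => g k ≠ 0) with ht'
  have hne : t'.Nonempty := ⟨k, by simp [ht', hk, hg]⟩
  obtain ⟨k0, hk0, hmax⟩ := t'.exists_max_image (fun k => piv k) hne
  have hk0t : k0 ∈ t := (Finset.mem_filter.1 hk0).1
  have hk0g : g k0 ≠ 0 := (Finset.mem_filter.1 hk0).2
  have heval := congrFun hsum (piv k0)
  rw [Finset.sum_apply] at heval
  have hsingle : ∑ i ∈ t, (g i • b i) (piv k0) = g k0 := by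
    rw [Finset.sum_eq_single k0]
    · simp [hdiag]
    · intro i hit hne'
      by_cases hgi : g i = 0
      · simp [hgi]
      · have hit' : i ∈ t' := Finset.mem_filter.2 ⟨hit, hgi⟩
        have hle : piv i ≤ piv k0 := hmax i hit'
        have hlt : piv i < piv k0 := lt_of_le_of_ne hle (fun h => hne' (hinj h))
        simp [hzero i _ hlt]
    · intro h; exact absurd hk0t h
  rw [hsingle] at heval
  exact hk0g heval

end Stmt18Aux

open Stmt18Aux

set_option maxHeartbeats 2000000 in
theorem stmt_18 (r s : ℕ) (hr : 1 ≤ r) (hs : 1 ≤ s) (F : Type*) [Field F]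
    (hF : ((r * s : ℕ) : Cardinal) < Cardinal.mk F)
    (ω : F) (hω : Function.Injective (fun i : Fin (r + s) => ω ^ (i : ℕ)))
    (mom : F → Fin (r + s) → F) (hmom : ∀ t i, mom t i = t ^ (i : ℕ))
    (H : F → Submodule F (Fin (r + s) → F))
    (hH : ∀ t : F, t ≠ 0 →
      H t = ⨆ n ∈ Finset.range r, Submodule.span F {mom (ω ^ n * t)})
    (hH0 : H 0 = ⨆ i : Fin (r + s), ⨆ _ : (i : ℕ) < r,
      Submodule.span F {Pi.single i (1 : F)}) :
    (∀ t : F, finrank F (H t) = r) ∧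
    ∀ W : Submodule F (Fin (r + s) → F), finrank F W = s →
      {t : F | H t ⊓ W ≠ ⊥}.Finite ∧ Set.ncard {t : F | H t ⊓ W ≠ ⊥} ≤ r * s := by
  classical
  have hrm : r ≤ r + s := Nat.le_add_right r s
  -- distinct powers of ω
  have hωpow : ∀ a b : ℕ, a < r + s → b < r + s → ω ^ a = ω ^ b → a = b := by
    intro a b ha hb hab
    have := hω (a₁ := ⟨a, ha⟩) (a₂ := ⟨b, hb⟩) (by simpa using hab)
    simpa [Fin.ext_iff] using this
  set fam : F → Fin r → (Fin (r + s) → F) := fun t n => mom (ω ^ (n : ℕ) * t) with hfamdef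
  have hHspan : ∀ t : F, t ≠ 0 → H t = Submodule.span F (Set.range (fam t)) := by
    intro t ht
    rw [hH t ht, ← Submodule.span_iUnion₂]
    congr 1
    ext v
    simp only [Set.mem_iUnion, Set.mem_singleton_iff, Set.mem_range, Finset.mem_range]
    constructor
    · rintro ⟨n, hn, rfl⟩; exact ⟨⟨n, hn⟩, rfl⟩
    · rintro ⟨n, rfl⟩; exact ⟨(n : ℕ), n.isLt, rfl⟩
  have hfamind : ∀ t : F, t ≠ 0 → LinearIndependent F (fam t) := by
    intro t ht
    have hinj : Function.Injective (fun n : Fin r => ω ^ (n : ℕ) * t) := by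
      intro a b hab
      have h1 : ω ^ (a : ℕ) = ω ^ (b : ℕ) := mul_right_cancel₀ ht hab
      exact Fin.ext (hωpow _ _ (lt_of_lt_of_le a.isLt hrm) (lt_of_lt_of_le b.isLt hrm) h1)
    have hdet : (Matrix.vandermonde fun n : Fin r => ω ^ (n : ℕ) * t).det ≠ 0 :=
      Matrix.det_vandermonde_ne_zero_iff.mpr hinj
    have hrows : LinearIndependent F
        (fun n : Fin r => Matrix.vandermonde (fun n : Fin r => ω ^ (n : ℕ) * t) n) :=
      Matrix.linearIndependent_rows_iff_isUnit.mpr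
        ((Matrix.isUnit_iff_isUnit_det _).mpr (isUnit_iff_ne_zero.mpr hdet))
    apply LinearIndependent.of_comp (LinearMap.funLeft F F (Fin.castLE hrm))
    convert hrows using 1
    funext n
    funext i
    simp [hfamdef, hmom, Matrix.vandermonde, mul_pow, LinearMap.funLeft_apply,
      Function.comp]
  set fam0 : Fin r → (Fin (r + s) → F) := fun n => Pi.single (Fin.castLE hrm n) (1 : F)
    with hfam0def
  have hH0span : H 0 = Submodule.span F (Set.range fam0) := by
    rw [hH0, ← Submodule.span_iUnion₂]
    congr 1
    ext v
    simp only [Set.mem_iUnion, Set.mem_singleton_iff, Set.mem_range]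
    constructor
    · rintro ⟨i, hi, rfl⟩
      exact ⟨⟨(i : ℕ), hi⟩, by congr 1⟩
    · rintro ⟨n, rfl⟩
      exact ⟨Fin.castLE hrm n, by simpa using n.isLt, rfl⟩
  have hfam0ind : LinearIndependent F fam0 := by
    apply linind_triangular (Fin.castLE_injective hrm) (b := fam0)
    · intro k; simp [hfam0def]
    · intro k j hj
      exact Pi.single_eq_of_ne (by intro h; rw [h] at hj; exact lt_irrefl _ hj) 1
  have hrank : ∀ t : F, finrank F (H t) = r := by
    intro t
    rcases eq_or_ne t 0 with rfl | ht
    · rw [hH0span, finrank_span_eq_card hfam0ind]; simp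
    · rw [hHspan t ht, finrank_span_eq_card (hfamind t ht)]; simp
  refine ⟨hrank, ?_⟩
  intro W hW
  -- pivots
  set isPiv : Fin (r + s) → Prop :=
    fun i => ∃ v ∈ W, v i ≠ 0 ∧ ∀ j, i < j → v j = 0 with hisPivdef
  set Pset : Finset (Fin (r + s)) := univ.filter isPiv with hPsetdef
  have hmaxsupp : ∀ v : Fin (r + s) → F, v ∈ W → v ≠ 0 →
      ∃ i, isPiv i ∧ v i ≠ 0 ∧ ∀ j, i < j → v j = 0 := by
    intro v hv hv0
    have hne : (univ.filter fun j => v j ≠ 0).Nonempty := by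
      rcases Function.ne_iff.mp hv0 with ⟨j, hj⟩
      exact ⟨j, by simpa using hj⟩
    set i := (univ.filter fun j => v j ≠ 0).max' hne with hi
    have him : i ∈ univ.filter fun j => v j ≠ 0 := Finset.max'_mem _ hne
    have hvi : v i ≠ 0 := (Finset.mem_filter.1 him).2
    have hz : ∀ j, i < j → v j = 0 := by
      intro j hj
      by_contra hvj
      have hjm : j ∈ univ.filter fun j => v j ≠ 0 := by simp [hvj]
      exact absurd (Finset.le_max' _ j hjm) (not_le.mpr hj)
    exact ⟨i, ⟨v, hv, hvi, hz⟩, hvi, hz⟩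
  have hbvex : ∀ i : Fin (r + s), ∃ b : Fin (r + s) → F,
      isPiv i → (b ∈ W ∧ b i = 1 ∧ ∀ j, i < j → b j = 0) := by
    intro i
    by_cases h : isPiv i
    · obtain ⟨v, hvW, hvi, hvz⟩ := h
      refine ⟨(v i)⁻¹ • v, fun _ => ⟨W.smul_mem _ hvW, ?_, fun j hj => ?_⟩⟩
      · simp [inv_mul_cancel₀ hvi]
      · simp [hvz j hj]
    · exact ⟨0, fun h' => absurd h' h⟩
  choose bv hbv using hbvex
  have hPcard : Pset.card = s := by
    have hptriv : ∀ pp : {x // x ∈ Pset}, isPiv (pp : Fin (r + s)) :=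
      fun pp => (Finset.mem_filter.1 pp.2).2
    have hle1 : Pset.card ≤ s := by
      have hind : LinearIndependent F (fun pp : {x // x ∈ Pset} => bv (pp : Fin (r + s))) :=
        linind_triangular Subtype.coe_injective
          (fun pp => (hbv _ (hptriv pp)).2.1) (fun pp j hj => (hbv _ (hptriv pp)).2.2 j hj)
      set bW : {x // x ∈ Pset} → W := fun pp => ⟨bv (pp : Fin (r + s)), (hbv _ (hptriv pp)).1⟩
        with hbWdef
      have hindW : LinearIndependent F bW := LinearIndependent.of_comp W.subtype hind
      have hcardle := hindW.fintype_card_le_finrank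
      rw [hW] at hcardle
      simpa [Fintype.card_coe] using hcardle
    have hle2 : s ≤ Pset.card := by
      have hinjφ : Function.Injective
          ((LinearMap.funLeft F F (fun pp : {x // x ∈ Pset} => (pp : Fin (r + s)))).comp
            W.subtype) := by
        rw [← LinearMap.ker_eq_bot, Submodule.eq_bot_iff]
        intro x hx
        rcases eq_or_ne x 0 with rfl | hx0
        · rfl
        · exfalso
          have hxv : (x : Fin (r + s) → F) ≠ 0 := fun h => hx0 (Subtype.ext h)
          obtain ⟨i, hpiv, hvi, _⟩ := hmaxsupp (x : Fin (r + s) → F) x.2 hxv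
          have hiP : i ∈ Pset := Finset.mem_filter.2 ⟨Finset.mem_univ i, hpiv⟩
          have hx0' := congrFun (LinearMap.mem_ker.mp hx) ⟨i, hiP⟩
          exact hvi hx0'
      have hfr := LinearMap.finrank_le_finrank_of_injective hinjφ
      rw [hW] at hfr
      simpa [Module.finrank_fintype_fun_eq_card, Fintype.card_coe] using hfr
    omega
  set piv : Fin s → Fin (r + s) := fun k => Pset.orderEmbOfFin hPcard k with hpivdef
  have hpivinj : Function.Injective piv := by
    intro a b hab
    exact (Pset.orderEmbOfFin hPcard).injective hab
  have hpivmem : ∀ k, isPiv (piv k) := by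
    intro k
    exact (Finset.mem_filter.1 (Finset.orderEmbOfFin_mem Pset hPcard k)).2
  have hbvP : ∀ k, bv (piv k) ∈ W ∧ bv (piv k) (piv k) = 1 ∧
      ∀ j, piv k < j → bv (piv k) j = 0 := fun k => hbv (piv k) (hpivmem k)
  have hWspan : Submodule.span F (Set.range fun k : Fin s => bv (piv k)) = W := by
    have hnes : Nonempty (Fin s) := ⟨⟨0, hs⟩⟩
    set bW : Fin s → W := fun k => ⟨bv (piv k), (hbvP k).1⟩ with hbWdef
    have hindW : LinearIndependent F bW := by
      apply LinearIndependent.of_comp W.subtype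
      exact linind_triangular hpivinj (fun k => (hbvP k).2.1) (fun k j hj => (hbvP k).2.2 j hj)
    have hcard : Fintype.card (Fin s) = finrank F W := by simp [hW]
    have htop : Submodule.span F (Set.range bW) = ⊤ :=
      hindW.span_eq_top_of_card_eq_finrank hcard
    calc Submodule.span F (Set.range fun k : Fin s => bv (piv k))
        = Submodule.map W.subtype (Submodule.span F (Set.range bW)) := by
          rw [Submodule.map_span, ← Set.range_comp]
          rfl
      _ = W := by rw [htop, Submodule.map_subtype_top]
  -- the polynomial
  set ee : Fin r ⊕ Fin s ≃ Fin (r + s) := finSumFinEquiv with heedef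
  set N : Matrix (Fin (r + s)) (Fin (r + s)) (Polynomial F) := fun i j =>
    Sum.elim (fun n : Fin r => Polynomial.C ((ω ^ (n : ℕ)) ^ (i : ℕ)) * Polynomial.X ^ (i : ℕ))
      (fun k : Fin s => Polynomial.C (bv (piv k) i)) (ee.symm j) with hNdef
  set p : Polynomial F := N.det with hpdef
  set eπ : Equiv.Perm (Fin (r + s)) → ℕ :=
    fun π => ∑ n : Fin r, ((π (ee (Sum.inl n))) : ℕ) with heπdef
  set aπ : Equiv.Perm (Fin (r + s)) → F :=
    fun π => ∏ n : Fin r, (ω ^ (n : ℕ)) ^ ((π (ee (Sum.inl n))) : ℕ) with haπdef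
  set bπ : Equiv.Perm (Fin (r + s)) → F :=
    fun π => ∏ k : Fin s, bv (piv k) (π (ee (Sum.inr k))) with hbπdef
  have hterm : ∀ π : Equiv.Perm (Fin (r + s)),
      (∏ j, N (π j) j) = Polynomial.C (aπ π * bπ π) * Polynomial.X ^ (eπ π) := by
    intro π
    rw [← Equiv.prod_comp ee (fun j => N (π j) j), Fintype.prod_sum_type]
    simp only [hNdef, Equiv.symm_apply_apply, Sum.elim_inl, Sum.elim_inr]
    rw [Finset.prod_mul_distrib, ← map_prod, Finset.prod_pow_eq_pow_sum, ← map_prod]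
    simp only [haπdef, hbπdef, heπdef, map_mul]
    ring
  have hcoeff : ∀ k : ℕ, p.coeff k = ∑ π : Equiv.Perm (Fin (r + s)),
      ((Equiv.Perm.sign π : ℤ) : F) * (if k = eπ π then aπ π * bπ π else 0) := by
    intro k
    rw [hpdef, Matrix.det_apply, Polynomial.finset_sum_coeff]
    apply Finset.sum_congr rfl
    intro π _
    rw [hterm π, Polynomial.coeff_smul, Polynomial.coeff_C_mul, Polynomial.coeff_X_pow]
    rcases Int.units_eq_one_or (Equiv.Perm.sign π) with hsgn | hsgn <;>
      simp [hsgn, Units.smul_def, mul_ite]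
  set Tm : ℕ := ∑ i : Fin (r + s), (i : ℕ) with hTmdef
  set σP : ℕ := ∑ k : Fin s, ((piv k) : ℕ) with hσPdef
  have hsum_split : ∀ π : Equiv.Perm (Fin (r + s)),
      eπ π + ∑ k : Fin s, ((π (ee (Sum.inr k))) : ℕ) = Tm := by
    intro π
    have h1 : ∑ i : Fin (r + s), ((π i) : ℕ) = Tm := Equiv.sum_comp π (fun i => (i : ℕ))
    have h2 : ∑ u : Fin r ⊕ Fin s, ((π (ee u)) : ℕ) = ∑ i : Fin (r + s), ((π i) : ℕ) :=
      Equiv.sum_comp ee (fun i => ((π i) : ℕ))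
    rw [Fintype.sum_sum_type] at h2
    simp only [heπdef]
    omega
  have hbπle : ∀ π : Equiv.Perm (Fin (r + s)), bπ π ≠ 0 →
      ∀ k, π (ee (Sum.inr k)) ≤ piv k := by
    intro π hbne k
    by_contra hlt
    push_neg at hlt
    apply hbne
    rw [hbπdef]
    exact Finset.prod_eq_zero (Finset.mem_univ k) ((hbvP k).2.2 _ hlt)
  have hpivP : ∀ k, piv k ∈ Pset := fun k => Finset.orderEmbOfFin_mem Pset hPcard k
  have himgpiv : Finset.image piv Finset.univ = Pset := by
    apply Finset.eq_of_subset_of_card_le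
    · intro x hx
      obtain ⟨n, _, rfl⟩ := Finset.mem_image.1 hx
      exact hpivP n
    · rw [Finset.card_image_of_injective _ hpivinj, hPcard]
      simp
  have hσPset : σP = ∑ x ∈ Pset, (x : ℕ) := by
    rw [hσPdef, ← himgpiv, Finset.sum_image (fun a _ b _ h => hpivinj h)]
  have hσPTm : σP ≤ Tm := by
    rw [hσPset, hTmdef]
    exact Finset.sum_le_sum_of_subset (Finset.subset_univ _)
  set k₀ : ℕ := Tm - σP with hk₀def
  have hk₀σP : k₀ + σP = Tm := by omega
  have hdvd : Polynomial.X ^ k₀ ∣ p := by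
    rw [Polynomial.X_pow_dvd_iff]
    intro d hd
    rw [hcoeff d]
    apply Finset.sum_eq_zero
    intro π _
    rcases eq_or_ne (bπ π) 0 with hb | hb
    · rcases eq_or_ne d (eπ π) with he | he <;> simp [he, hb]
    · have hle : ∑ k : Fin s, ((π (ee (Sum.inr k))) : ℕ) ≤ σP := by
        rw [hσPdef]
        exact Finset.sum_le_sum (fun k _ => hbπle π hb k)
      have hsp := hsum_split π
      have hne : d ≠ eπ π := by omega
      simp [hne]
  -- complement
  set Pc : Finset (Fin (r + s)) := Psetᶜ with hPcdef
  have hPccard : Pc.card = r := by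
    rw [hPcdef, Finset.card_compl, hPcard]
    simp
  set comp : Fin r → Fin (r + s) := fun n => Pc.orderEmbOfFin hPccard n with hcompdef
  have hcompinj : Function.Injective comp := by
    intro a b hab
    exact (Pc.orderEmbOfFin hPccard).injective hab
  have hcompmem : ∀ n, comp n ∉ Pset := by
    intro n
    have h := Finset.orderEmbOfFin_mem Pc hPccard n
    exact Finset.mem_compl.1 h
  have himgcomp : Finset.image comp Finset.univ = Pc := by
    apply Finset.eq_of_subset_of_card_le
    · intro x hx
      obtain ⟨n, _, rfl⟩ := Finset.mem_image.1 hx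
      exact Finset.orderEmbOfFin_mem Pc hPccard n
    · rw [Finset.card_image_of_injective _ hcompinj, hPccard]
      simp
  have hcompsum : (∑ n : Fin r, ((comp n) : ℕ)) + σP = Tm := by
    have h1 : ∑ n : Fin r, ((comp n) : ℕ) = ∑ x ∈ Pc, (x : ℕ) := by
      rw [← himgcomp, Finset.sum_image (fun a _ b _ h => hcompinj h)]
    have h2 : ∑ x ∈ Pc, (x : ℕ) + ∑ x ∈ Pset, (x : ℕ) = Tm := by
      rw [hPcdef, hTmdef]
      exact Finset.sum_compl_add_sum Pset _
    rw [h1, hσPset]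
    exact h2
  have hcomp_ne_piv : ∀ n k, comp n ≠ piv k := by
    intro n k h
    exact hcompmem n (h ▸ hpivP k)
  have hSrsTm : (∑ i ∈ Finset.range s, i) + (∑ i ∈ Finset.range r, i) + r * s = Tm := by
    have h1 : Tm = ∑ i ∈ Finset.range (r + s), i := by
      rw [hTmdef]
      exact Fin.sum_univ_eq_sum_range (fun i => i) (r + s)
    have h2 := sum_range_add r s
    omega
  have hcoeffk0 : p.coeff k₀ ≠ 0 := by
    have hfbij : Function.Bijective (fun j : Fin (r + s) => Sum.elim comp piv (ee.symm j)) := by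
      rw [Fintype.bijective_iff_injective_and_card]
      refine ⟨?_, rfl⟩
      have hSE : Function.Injective (Sum.elim comp piv : Fin r ⊕ Fin s → Fin (r + s)) := by
        intro u1 u2 h12
        cases u1 with
        | inl n1 =>
          cases u2 with
          | inl n2 => exact congrArg Sum.inl (hcompinj h12)
          | inr k2 => exact absurd h12 (hcomp_ne_piv n1 k2)
        | inr k1 =>
          cases u2 with
          | inl n2 => exact absurd h12.symm (hcomp_ne_piv n2 k1)
          | inr k2 => exact congrArg Sum.inr (hpivinj h12)
      intro j1 j2 h12
      exact ee.symm.injective (hSE h12)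
    set π₀ : Equiv.Perm (Fin (r + s)) := Equiv.ofBijective _ hfbij with hπ₀def
    have hπ₀l : ∀ n, π₀ (ee (Sum.inl n)) = comp n := by
      intro n
      show Sum.elim comp piv (ee.symm (ee (Sum.inl n))) = comp n
      simp
    have hπ₀r : ∀ k, π₀ (ee (Sum.inr k)) = piv k := by
      intro k
      show Sum.elim comp piv (ee.symm (ee (Sum.inr k))) = piv k
      simp
    set lift : Equiv.Perm (Fin r) → Equiv.Perm (Fin (r + s)) :=
      fun τ => π₀ * (ee.permCongr (Equiv.sumCongr τ (Equiv.refl (Fin s)))) with hliftdef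
    have hliftl : ∀ τ n, lift τ (ee (Sum.inl n)) = comp (τ n) := by
      intro τ n
      simp only [hliftdef, Equiv.Perm.mul_apply, Equiv.permCongr_apply, Equiv.symm_apply_apply,
        Equiv.sumCongr_apply, Sum.map_inl]
      exact hπ₀l (τ n)
    have hliftr : ∀ τ k, lift τ (ee (Sum.inr k)) = piv k := by
      intro τ k
      simp only [hliftdef, Equiv.Perm.mul_apply, Equiv.permCongr_apply, Equiv.symm_apply_apply,
        Equiv.sumCongr_apply, Sum.map_inr, Equiv.refl_apply]
      exact hπ₀r k
    have hsign : ∀ τ, Equiv.Perm.sign (lift τ) = Equiv.Perm.sign π₀ * Equiv.Perm.sign τ := by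
      intro τ
      simp only [hliftdef, map_mul]
      congr 1
      rw [Equiv.Perm.sign_permCongr, Equiv.Perm.sign_sumCongr, Equiv.Perm.sign_refl, mul_one]
    set vnodes : Fin r → F := fun x => ω ^ ((comp x : Fin (r + s)) : ℕ) with hvnodesdef
    have hvinj : Function.Injective vnodes := by
      intro a b hab
      exact hcompinj (Fin.ext (hωpow _ _ (comp a).isLt (comp b).isLt hab))
    have hvdet : (Matrix.vandermonde vnodes).det ≠ 0 :=
      Matrix.det_vandermonde_ne_zero_iff.mpr hvinj
    have hcondk : ∀ π : Equiv.Perm (Fin (r + s)),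
        (((Equiv.Perm.sign π : ℤ) : F) * (if k₀ = eπ π then aπ π * bπ π else 0)) ≠ 0 →
        ∀ k, π (ee (Sum.inr k)) = piv k := by
      intro π hf
      have hke : k₀ = eπ π := by
        by_contra hk
        simp [hk] at hf
      have hbne : bπ π ≠ 0 := by
        intro hb
        rw [if_pos hke, hb, mul_zero, mul_zero] at hf
        exact hf rfl
      have hle : ∀ k, π (ee (Sum.inr k)) ≤ piv k := hbπle π hbne
      have hsum : ∑ k : Fin s, ((π (ee (Sum.inr k))) : ℕ) = ∑ k : Fin s, ((piv k) : ℕ) := by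
        have hsp := hsum_split π
        omega
      intro k
      have heach := (Finset.sum_eq_sum_iff_of_le
        (fun k _ => Fin.le_def.mp (hle k))).mp hsum k (Finset.mem_univ k)
      exact Fin.ext heach
    rw [hcoeff k₀]
    rw [← Finset.sum_filter_of_ne (p := fun π => ∀ k, π (ee (Sum.inr k)) = piv k)
      (fun π _ hf => hcondk π hf)]
    have hbij : ∑ τ : Equiv.Perm (Fin r),
        (((Equiv.Perm.sign (lift τ) : ℤ) : F) *
          (if k₀ = eπ (lift τ) then aπ (lift τ) * bπ (lift τ) else 0))
        = ∑ π ∈ Finset.univ.filter (fun π => ∀ k, π (ee (Sum.inr k)) = piv k),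
        (((Equiv.Perm.sign π : ℤ) : F) * (if k₀ = eπ π then aπ π * bπ π else 0)) := by
      apply Finset.sum_bij (i := fun τ _ => lift τ)
      · intro τ _
        exact Finset.mem_filter.2 ⟨Finset.mem_univ _, fun k => hliftr τ k⟩
      · intro τ1 _ τ2 _ h12
        apply Equiv.ext
        intro n
        have h2 := Equiv.ext_iff.mp h12 (ee (Sum.inl n))
        rw [hliftl, hliftl] at h2
        exact hcompinj h2
      · intro π hπ
        have hcond := (Finset.mem_filter.1 hπ).2
        have hmemPc : ∀ n, π (ee (Sum.inl n)) ∈ Pc := by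
          intro n
          apply Finset.mem_compl.2
          intro hmem
          rw [← himgpiv] at hmem
          obtain ⟨k, _, hk⟩ := Finset.mem_image.1 hmem
          have h3 : π (ee (Sum.inr k)) = π (ee (Sum.inl n)) := by rw [hcond k, hk]
          have h4 := ee.injective (π.injective h3)
          simp at h4
        set g : Fin r → Fin r :=
          fun n => (Pc.orderIsoOfFin hPccard).symm ⟨π (ee (Sum.inl n)), hmemPc n⟩ with hgdef
        have hcompg : ∀ n, comp (g n) = π (ee (Sum.inl n)) := by
          intro n
          have h5 := (Pc.orderIsoOfFin hPccard).apply_symm_apply ⟨π (ee (Sum.inl n)), hmemPc n⟩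
          calc comp (g n) = ((Pc.orderIsoOfFin hPccard) (g n) : Fin (r + s)) :=
                (Finset.coe_orderIsoOfFin_apply _ _ _).symm
            _ = π (ee (Sum.inl n)) := by rw [hgdef, h5]
        have hginj : Function.Injective g := by
          intro a b hab
          have h6 : comp (g a) = comp (g b) := by rw [hab]
          rw [hcompg, hcompg] at h6
          have h7 := ee.injective (π.injective h6)
          simpa using h7
        refine ⟨Equiv.ofBijective g ((Fintype.bijective_iff_injective_and_card g).mpr
          ⟨hginj, rfl⟩), Finset.mem_univ _, ?_⟩
        apply Equiv.ext
        intro j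
        obtain ⟨u, rfl⟩ : ∃ u, ee u = j := ⟨ee.symm j, by simp⟩
        cases u with
        | inl n =>
          rw [hliftl]
          exact hcompg n
        | inr k =>
          rw [hliftr, hcond k]
      · intro τ _
        rfl
    rw [← hbij]
    have hterm2 : ∀ τ : Equiv.Perm (Fin r),
        (((Equiv.Perm.sign (lift τ) : ℤ) : F) *
          (if k₀ = eπ (lift τ) then aπ (lift τ) * bπ (lift τ) else 0))
        = ((Equiv.Perm.sign π₀ : ℤ) : F) *
          (((Equiv.Perm.sign τ : ℤ) : F) * ∏ n : Fin r, Matrix.vandermonde vnodes (τ n) n) := by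
      intro τ
      have he : eπ (lift τ) = k₀ := by
        have h1 : eπ (lift τ) = ∑ n : Fin r, ((comp (τ n)) : ℕ) := by
          simp only [heπdef]
          exact Finset.sum_congr rfl (fun n _ => by rw [hliftl])
        have h2 : ∑ n : Fin r, ((comp (τ n)) : ℕ) = ∑ n : Fin r, ((comp n) : ℕ) :=
          Equiv.sum_comp τ (fun n => ((comp n) : ℕ))
        omega
      have hb1 : bπ (lift τ) = 1 := by
        simp only [hbπdef]
        have hone : ∀ k : Fin s, bv (piv k) (lift τ (ee (Sum.inr k))) = (1 : F) := by
          intro k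
          rw [hliftr τ k]
          exact (hbvP k).2.1
        rw [Finset.prod_congr rfl (fun k _ => hone k)]
        exact Finset.prod_const_one
      have ha1 : aπ (lift τ) = ∏ n : Fin r, Matrix.vandermonde vnodes (τ n) n := by
        simp only [haπdef]
        apply Finset.prod_congr rfl
        intro n _
        rw [hliftl]
        show (ω ^ (n : ℕ)) ^ ((comp (τ n)) : ℕ) = vnodes (τ n) ^ (n : ℕ)
        rw [hvnodesdef]
        rw [← pow_mul, ← pow_mul, Nat.mul_comm]
      rw [if_pos he.symm, hsign τ, ha1, hb1, mul_one]
      push_cast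
      ring
    rw [Finset.sum_congr rfl (fun τ _ => hterm2 τ), ← Finset.mul_sum]
    have hdetsum : ∑ τ : Equiv.Perm (Fin r),
        ((Equiv.Perm.sign τ : ℤ) : F) * ∏ n, Matrix.vandermonde vnodes (τ n) n
        = (Matrix.vandermonde vnodes).det := (Matrix.det_apply' _).symm
    rw [hdetsum]
    apply mul_ne_zero _ hvdet
    rcases Int.units_eq_one_or (Equiv.Perm.sign π₀) with hsgn | hsgn <;> simp [hsgn]
  have hdeg : p.natDegree + (∑ i ∈ Finset.range s, i) ≤ Tm := by
    have hsle : (∑ i ∈ Finset.range s, i) ≤ Tm := by omega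
    have h1 : p.natDegree ≤ Tm - (∑ i ∈ Finset.range s, i) := by
      rw [hpdef, Matrix.det_apply]
      apply Polynomial.natDegree_sum_le_of_forall_le
      intro π _
      have hterm' := hterm π
      have hmain : ∀ π : Equiv.Perm (Fin (r + s)), eπ π ≤ Tm - (∑ i ∈ Finset.range s, i) := by
        intro π
        have hsp := hsum_split π
        have hinj2 : Function.Injective (fun k : Fin s => π (ee (Sum.inr k))) := by
          intro a b hab
          have h3 := ee.injective (π.injective hab)
          simpa using h3
        have hlow : (∑ i ∈ Finset.range s, i) ≤ ∑ k : Fin s, ((π (ee (Sum.inr k))) : ℕ) := by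
          have hcardi :
              (Finset.image (fun k : Fin s => π (ee (Sum.inr k))) Finset.univ).card = s := by
            rw [Finset.card_image_of_injective _ hinj2]; simp
          have hh := sum_range_card_le_fin
            (Finset.image (fun k : Fin s => π (ee (Sum.inr k))) Finset.univ)
          rw [hcardi, Finset.sum_image (fun a _ b _ h => hinj2 h)] at hh
          exact hh
        omega
      have hsd : (Equiv.Perm.sign π • ∏ j, N (π j) j).natDegree
          = (Polynomial.C (aπ π * bπ π) * Polynomial.X ^ (eπ π)).natDegree := by
        rw [hterm']
        rcases Int.units_eq_one_or (Equiv.Perm.sign π) with hsgn | hsgn <;>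
          simp [hsgn, Units.smul_def]
      rw [hsd]
      exact le_trans (Polynomial.natDegree_C_mul_X_pow_le _ _) (hmain π)
    omega
  obtain ⟨q, hq⟩ := hdvd
  have hp0 : p ≠ 0 := fun h => hcoeffk0 (by simp [h])
  have hq0 : q ≠ 0 := fun h => hp0 (by simp [hq, h])
  have hqdeg : k₀ + q.natDegree = p.natDegree := by
    rw [hq, Polynomial.natDegree_mul (pow_ne_zero k₀ Polynomial.X_ne_zero) hq0,
      Polynomial.natDegree_X_pow]
  have hσPub : σP ≤ r * s + ∑ i ∈ Finset.range s, i := by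
    have h1 : ∑ i ∈ Finset.range r, i ≤ ∑ x ∈ Pc, (x : ℕ) := by
      have := sum_range_card_le_fin Pc
      rwa [hPccard] at this
    have h2 : ∑ x ∈ Pc, (x : ℕ) + σP = Tm := by
      rw [← hcompsum]
      congr 1
      rw [← himgcomp, Finset.sum_image (fun a _ b _ h => hcompinj h)]
    omega
  have hqbound : q.natDegree + (∑ i ∈ Finset.range s, i) ≤ σP := by omega
  have hbadroot : ∀ t : F, t ≠ 0 → H t ⊓ W ≠ ⊥ → q.IsRoot t := by
    intro t ht hbad
    obtain ⟨v, hvmem, hv0⟩ := (Submodule.ne_bot_iff _).mp hbad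
    obtain ⟨hvH, hvW⟩ := Submodule.mem_inf.mp hvmem
    rw [hHspan t ht] at hvH
    obtain ⟨c, hc⟩ := (Submodule.mem_span_range_iff_exists_fun F).mp hvH
    rw [← hWspan] at hvW
    obtain ⟨d, hd⟩ := (Submodule.mem_span_range_iff_exists_fun F).mp hvW
    set u : Fin (r + s) → F := fun j => Sum.elim c (fun k => -(d k)) (ee.symm j) with hudef
    have hcne : ∃ n, c n ≠ 0 := by
      by_contra hcall
      push_neg at hcall
      apply hv0
      rw [← hc]
      simp [hcall]
    obtain ⟨n0, hn0⟩ := hcne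
    have hu0 : u ≠ 0 := by
      intro h
      apply hn0
      have h2 := congrFun h (ee (Sum.inl n0))
      simpa [hudef] using h2
    have hmul : (N.map (Polynomial.eval t)).mulVec u = 0 := by
      funext i
      show ∑ j, (N.map (Polynomial.eval t)) i j * u j = 0
      rw [← Equiv.sum_comp ee (fun j => (N.map (Polynomial.eval t)) i j * u j),
        Fintype.sum_sum_type]
      simp only [Matrix.map_apply]
      simp only [Matrix.map_apply, hNdef, hudef, Equiv.symm_apply_apply, Sum.elim_inl,
        Sum.elim_inr, Polynomial.eval_mul, Polynomial.eval_C, Polynomial.eval_pow,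
        Polynomial.eval_X]
      have hcv := congrFun hc i
      have hdv := congrFun hd i
      rw [Finset.sum_apply] at hcv hdv
      simp only [Pi.smul_apply, smul_eq_mul, hfamdef, hmom, mul_pow] at hcv hdv
      have hg1 : ∑ n : Fin r, (ω ^ (n : ℕ)) ^ (i : ℕ) * t ^ (i : ℕ) * c n
          = ∑ n : Fin r, c n * ((ω ^ (n : ℕ)) ^ (i : ℕ) * t ^ (i : ℕ)) := by
        apply Finset.sum_congr rfl
        intro n _
        ring
      have hg2 : ∑ k : Fin s, bv (piv k) i * -(d k)
          = -∑ k : Fin s, d k * bv (piv k) i := by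
        rw [← Finset.sum_neg_distrib]
        apply Finset.sum_congr rfl
        intro k _
        ring
      rw [hg1, hg2, hcv, hdv]
      ring
    have hdet0 : (N.map (Polynomial.eval t)).det = 0 :=
      Matrix.exists_mulVec_eq_zero_iff.mp ⟨u, hu0, hmul⟩
    have hpt : Polynomial.eval t p = 0 := by
      have hmapdet := RingHom.map_det (Polynomial.evalRingHom t) N
      rw [hpdef]
      calc Polynomial.eval t N.det = (Polynomial.evalRingHom t) N.det := rfl
        _ = (N.map (Polynomial.evalRingHom t)).det := hmapdet
        _ = (N.map (Polynomial.eval t)).det := rfl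
        _ = 0 := hdet0
    have hqt : t ^ k₀ * Polynomial.eval t q = 0 := by
      rw [hq] at hpt
      simpa using hpt
    have := (mul_eq_zero.mp hqt).resolve_left (pow_ne_zero _ ht)
    exact this
  have h0bad : H 0 ⊓ W ≠ ⊥ → σP + 1 ≤ r * s + ∑ i ∈ Finset.range s, i := by
    intro h0
    obtain ⟨v, hvmem, hv0⟩ := (Submodule.ne_bot_iff _).mp h0
    obtain ⟨hvH, hvW⟩ := Submodule.mem_inf.mp hvmem
    have hvhigh : ∀ j : Fin (r + s), r ≤ (j : ℕ) → v j = 0 := by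
      rw [hH0span] at hvH
      have hKle : ∀ x ∈ Submodule.span F (Set.range fam0),
          ∀ j : Fin (r + s), r ≤ (j : ℕ) → x j = 0 := by
        intro x hx
        induction hx using Submodule.span_induction with
        | mem x hxm =>
          obtain ⟨n, rfl⟩ := hxm
          intro j hj
          apply Pi.single_eq_of_ne
          intro hne
          rw [hne] at hj
          simp at hj
          omega
        | zero => intro j hj; rfl
        | add x y _ _ hx hy => intro j hj; simp [hx j hj, hy j hj]
        | smul a x _ hx => intro j hj; simp [hx j hj]
      exact hKle v hvH
    obtain ⟨i, hpivi, hvi, _⟩ := hmaxsupp v hvW hv0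
    have hir : (i : ℕ) < r := by
      by_contra hge
      exact hvi (hvhigh i (by omega))
    have hiP : i ∈ Pset := Finset.mem_filter.2 ⟨Finset.mem_univ i, hpivi⟩
    have h1 : (i : ℕ) + ∑ x ∈ Pset.erase i, (x : ℕ) = σP := by
      rw [hσPset]
      exact Finset.add_sum_erase Pset _ hiP
    have h2 : ∑ x ∈ (Pset.erase i)ᶜ, (x : ℕ) + ∑ x ∈ Pset.erase i, (x : ℕ) = Tm := by
      rw [hTmdef]
      exact Finset.sum_compl_add_sum (Pset.erase i) _
    have hcardE : (Pset.erase i)ᶜ.card = r + 1 := by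
      rw [Finset.card_compl, Finset.card_erase_of_mem hiP, hPcard]
      simp
      omega
    have h3 : ∑ x ∈ Finset.range (r + 1), x ≤ ∑ x ∈ (Pset.erase i)ᶜ, (x : ℕ) := by
      have := sum_range_card_le_fin ((Pset.erase i)ᶜ)
      rwa [hcardE] at this
    have h4 : ∑ x ∈ Finset.range (r + 1), x = ∑ x ∈ Finset.range r, x + r :=
      Finset.sum_range_succ _ r
    omega
  have hrootscard : (q.roots.toFinset.card : ℕ) ≤ q.natDegree :=
    le_trans (Multiset.toFinset_card_le _) (Polynomial.card_roots' q)
  by_cases h0 : H 0 ⊓ W = ⊥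
  · have hsub : {t : F | H t ⊓ W ≠ ⊥} ⊆ ↑q.roots.toFinset := by
      intro t ht
      rcases eq_or_ne t 0 with rfl | htne
      · exact absurd h0 ht
      · simp only [Multiset.mem_toFinset, Finset.coe_sort_coe, Finset.mem_coe]
        exact (Polynomial.mem_roots hq0).2 (hbadroot t htne ht)
    refine ⟨Set.Finite.subset q.roots.toFinset.finite_toSet hsub, ?_⟩
    calc Set.ncard {t : F | H t ⊓ W ≠ ⊥} ≤ (↑q.roots.toFinset : Set F).ncard :=
          Set.ncard_le_ncard hsub q.roots.toFinset.finite_toSet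
      _ = q.roots.toFinset.card := Set.ncard_coe_finset _
      _ ≤ r * s := by omega
  · have hsub : {t : F | H t ⊓ W ≠ ⊥} ⊆ ↑(insert (0 : F) q.roots.toFinset) := by
      intro t ht
      rcases eq_or_ne t 0 with rfl | htne
      · simp
      · simp only [Finset.coe_insert, Set.mem_insert_iff, Multiset.mem_toFinset, Finset.mem_coe]
        exact Or.inr ((Polynomial.mem_roots hq0).2 (hbadroot t htne ht))
    have h0b := h0bad h0
    refine ⟨Set.Finite.subset (insert (0:F) q.roots.toFinset).finite_toSet hsub, ?_⟩
    calc Set.ncard {t : F | H t ⊓ W ≠ ⊥} ≤ (↑(insert (0:F) q.roots.toFinset) : Set F).ncard :=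
          Set.ncard_le_ncard hsub (insert (0:F) q.roots.toFinset).finite_toSet
      _ = (insert (0:F) q.roots.toFinset).card := Set.ncard_coe_finset _
      _ ≤ q.roots.toFinset.card + 1 := Finset.card_insert_le _ _
      _ ≤ r * s := by omega
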